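/- arXiv:2512.06488 — 4 statements merged into one kernel-verified Lean document; each statement's English description precedes it below -/
import Mathlib

section
/- For a matrix F₁ ∈ ℂ^{n×n}, let F̃₁ ∈ ℂ^{n×n²} be the block-diagonal stacking of the rows of F₁, i.e. (F̃₁)_{j,(j-1)n+l} = (F₁)_{jl} and all other entries zero. Then for p, q ∈ [1,∞) with 1/p + 1/q = 1, the operator p-norm of F̃₁ equals the maximum row q-norm of F₁: ‖F̃₁‖_p = max_j (∑_l |(F₁)_{jl}|^q)^{1/q}. -/
open scoped BigOperators

/-- The vector `p`-norm on `ι → ℂ`. -/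
noncomputable def vecPNorm {ι : Type*} [Fintype ι] (p : ℝ) (x : ι → ℂ) : ℝ :=
  (∑ i, ‖x i‖ ^ p) ^ (1 / p)

/-- The operator `p`-norm of a matrix, as the supremum of `‖A y‖_p` over `p`-unit vectors `y`. -/
noncomputable def opPNorm {ι κ : Type*} [Fintype ι] [Fintype κ] (p : ℝ)
    (A : Matrix ι κ ℂ) : ℝ :=
  sSup {r | ∃ y : κ → ℂ, vecPNorm p y = 1 ∧ r = vecPNorm p (A.mulVec y)}

/-- the operator `p`-norm of the block-diagonal stacking `F̃₁` of the rows of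
`F₁` equals the maximum row `q`-norm of `F₁`, when `1/p + 1/q = 1`. -/
theorem opPNorm_rowStacking_eq_maxRowQNorm (n : ℕ) (hn : 0 < n)
    (F₁ : Matrix (Fin n) (Fin n) ℂ) (p q : ℝ) (hp : 1 ≤ p) (hq : 1 ≤ q)
    (hpq : 1 / p + 1 / q = 1)
    (Ftilde : Matrix (Fin n) (Fin n × Fin n) ℂ)
    (hF : ∀ j j' l, Ftilde j (j', l) = if j = j' then F₁ j l else 0) :
    opPNorm p Ftilde = ⨆ j : Fin n, vecPNorm q (fun l => F₁ j l) := by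
  haveI : Nonempty (Fin n) := Fin.pos_iff_nonempty.mp hn
  have hp0 : (0:ℝ) < p := lt_of_lt_of_le one_pos hp
  have hq0 : (0:ℝ) < q := lt_of_lt_of_le one_pos hq
  have hp1 : 1 < p := by
    rcases lt_or_eq_of_le hp with h | h
    · exact h
    · exfalso
      have h1 : (0:ℝ) < 1 / q := by positivity
      rw [← h] at hpq
      simp at hpq
      linarith
  have hq1 : 1 < q := by
    rcases lt_or_eq_of_le hq with h | h
    · exact h
    · exfalso
      have h1 : (0:ℝ) < 1 / p := by positivity
      rw [← h] at hpq
      simp at hpq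
      linarith
  have hpqmul : p + q = p * q := by
    field_simp at hpq
    linarith
  have hpq2 : (q - 1) * p = q := by ring_nf; linarith [hpqmul]
  have hqp : Real.HolderConjugate q p :=
    Real.holderConjugate_iff.mpr ⟨hq1, by rw [← one_div, ← one_div, add_comm]; exact hpq⟩
  -- mulVec formula
  have hmv : ∀ (y : Fin n × Fin n → ℂ) (j : Fin n),
      Ftilde.mulVec y j = ∑ l, F₁ j l * y (j, l) := by
    intro y j
    show ∑ x : Fin n × Fin n, Ftilde j x * y x = _
    rw [Fintype.sum_prod_type]
    rw [Finset.sum_eq_single j]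
    · simp [hF]
    · intro j' _ hj'
      apply Finset.sum_eq_zero
      intro l _
      rw [hF]
      simp [Ne.symm hj']
    · simp
  set M := ⨆ j : Fin n, vecPNorm q (fun l => F₁ j l) with hM
  have hvnn : ∀ j, (0:ℝ) ≤ vecPNorm q (fun l => F₁ j l) := fun j =>
    Real.rpow_nonneg (Finset.sum_nonneg fun _ _ => Real.rpow_nonneg (norm_nonneg _) _) _
  have hMge : ∀ j, vecPNorm q (fun l => F₁ j l) ≤ M := fun j =>
    le_ciSup (f := fun j : Fin n => vecPNorm q (fun l => F₁ j l)) (Set.Finite.bddAbove (Set.finite_range _)) j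
  have hM0 : (0:ℝ) ≤ M := le_trans (hvnn ⟨0, hn⟩) (hMge ⟨0, hn⟩)
  -- the upper bound
  have hbound : ∀ y : Fin n × Fin n → ℂ, vecPNorm p y = 1 →
      vecPNorm p (Ftilde.mulVec y) ≤ M := by
    intro y hy
    have hS : (0:ℝ) ≤ ∑ x : Fin n × Fin n, ‖y x‖ ^ p :=
      Finset.sum_nonneg fun _ _ => Real.rpow_nonneg (norm_nonneg _) _
    have hsum1 : ∑ x : Fin n × Fin n, ‖y x‖ ^ p = 1 := by
      have h := congrArg (· ^ p) hy
      simp only [vecPNorm, one_div] at h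
      rwa [Real.rpow_inv_rpow hS hp0.ne', Real.one_rpow] at h
    have hrow : ∀ j, ‖Ftilde.mulVec y j‖ ^ p ≤ M ^ p * ∑ l, ‖y (j, l)‖ ^ p := by
      intro j
      have ht0 : (0:ℝ) ≤ (∑ l, ‖y (j, l)‖ ^ p) ^ (1/p) :=
        Real.rpow_nonneg (Finset.sum_nonneg fun _ _ => Real.rpow_nonneg (norm_nonneg _) _) _
      have h1 : ‖Ftilde.mulVec y j‖ ≤
          (∑ l, ‖F₁ j l‖ ^ q) ^ (1/q) * (∑ l, ‖y (j, l)‖ ^ p) ^ (1/p) := by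
        rw [hmv]
        refine le_trans (norm_sum_le _ _) ?_
        calc ∑ l, ‖F₁ j l * y (j, l)‖ = ∑ l, ‖F₁ j l‖ * ‖y (j, l)‖ := by
              simp [norm_mul]
          _ ≤ _ := Real.inner_le_Lp_mul_Lq_of_nonneg Finset.univ hqp
              (fun _ _ => norm_nonneg _) (fun _ _ => norm_nonneg _)
      have h2 : ‖Ftilde.mulVec y j‖ ≤ M * (∑ l, ‖y (j, l)‖ ^ p) ^ (1/p) :=
        le_trans h1 (mul_le_mul_of_nonneg_right (hMge j) ht0)
      calc ‖Ftilde.mulVec y j‖ ^ p ≤ (M * (∑ l, ‖y (j, l)‖ ^ p) ^ (1/p)) ^ p :=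
            Real.rpow_le_rpow (norm_nonneg _) h2 hp0.le
        _ = M ^ p * ∑ l, ‖y (j, l)‖ ^ p := by
            rw [Real.mul_rpow hM0 ht0, one_div,
              Real.rpow_inv_rpow (Finset.sum_nonneg fun _ _ =>
                Real.rpow_nonneg (norm_nonneg _) _) hp0.ne']
    have hsum : ∑ j, ‖Ftilde.mulVec y j‖ ^ p ≤ M ^ p := by
      calc ∑ j, ‖Ftilde.mulVec y j‖ ^ p ≤ ∑ j, M ^ p * ∑ l, ‖y (j, l)‖ ^ p :=
            Finset.sum_le_sum fun j _ => hrow j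
        _ = M ^ p * ∑ j, ∑ l, ‖y (j, l)‖ ^ p := by rw [Finset.mul_sum]
        _ = M ^ p := by
            have h := (Fintype.sum_prod_type (f := fun x : Fin n × Fin n => ‖y x‖ ^ p)).symm
            rw [h, hsum1, mul_one]
    calc vecPNorm p (Ftilde.mulVec y) = (∑ j, ‖Ftilde.mulVec y j‖ ^ p) ^ (1/p) := rfl
      _ ≤ (M ^ p) ^ (1/p) :=
          Real.rpow_le_rpow (Finset.sum_nonneg fun _ _ =>
            Real.rpow_nonneg (norm_nonneg _) _) hsum (by positivity)
      _ = M := by rw [one_div, Real.rpow_rpow_inv hM0 hp0.ne']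
  -- achievability
  have hach : ∀ j : Fin n, ∃ y : Fin n × Fin n → ℂ, vecPNorm p y = 1 ∧
      vecPNorm p (Ftilde.mulVec y) = vecPNorm q (fun l => F₁ j l) := by
    intro j
    set s := ∑ l, ‖F₁ j l‖ ^ q with hs
    have hs0 : (0:ℝ) ≤ s :=
      Finset.sum_nonneg fun _ _ => Real.rpow_nonneg (norm_nonneg _) _
    have hvq : vecPNorm q (fun l => F₁ j l) = s ^ (1/q) := rfl
    rcases eq_or_lt_of_le hs0 with hsz | hspos
    · -- zero row
      have hrow0 : ∀ l, F₁ j l = 0 := by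
        intro l
        have h := (Finset.sum_eq_zero_iff_of_nonneg
          (fun i _ => Real.rpow_nonneg (norm_nonneg (F₁ j i)) q)).mp hsz.symm l
          (Finset.mem_univ l)
        have := (Real.rpow_eq_zero (norm_nonneg _) hq0.ne').mp h
        exact norm_eq_zero.mp this
      refine ⟨fun x => if x = (j, ⟨0, hn⟩) then 1 else 0, ?_, ?_⟩
      · show (∑ x : Fin n × Fin n, ‖(if x = (j, ⟨0, hn⟩) then (1:ℂ) else 0)‖ ^ p) ^ (1/p) = 1
        have : ∀ x : Fin n × Fin n,
            ‖(if x = (j, ⟨0, hn⟩) then (1:ℂ) else 0)‖ ^ p =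
            if x = (j, ⟨0, hn⟩) then 1 else 0 := by
          intro x
          by_cases h : x = (j, ⟨0, hn⟩) <;>
            simp [h, Real.one_rpow, Real.zero_rpow hp0.ne']
        rw [Finset.sum_congr rfl fun x _ => this x, Finset.sum_ite_eq'
          Finset.univ _ (fun _ => (1:ℝ))]
        simp [Real.one_rpow]
      · have hz : Ftilde.mulVec (fun x => if x = (j, ⟨0, hn⟩) then (1:ℂ) else 0) = 0 := by
          funext j'
          rw [hmv]
          apply Finset.sum_eq_zero
          intro l _
          by_cases h : ((j':Fin n), l) = (j, ⟨0, hn⟩)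
          · have hj : j' = j := (Prod.ext_iff.mp h).1
            rw [hj, hrow0]
            simp
          · simp [h]
        rw [hz, hvq, ← hsz]
        show (∑ _j : Fin n, ‖(0:ℂ)‖ ^ p) ^ (1/p) = (0:ℝ) ^ (1/q)
        simp only [norm_zero, Real.zero_rpow hp0.ne', Finset.sum_const_zero]
        rw [Real.zero_rpow (one_div_ne_zero hp0.ne'), Real.zero_rpow (one_div_ne_zero hq0.ne')]
    · -- nonzero row
      set c := s ^ (1/p) with hc
      have hcpos : (0:ℝ) < c := Real.rpow_pos_of_pos hspos _
      set y : Fin n × Fin n → ℂ := fun x =>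
        if x.1 = j then (starRingEnd ℂ) (F₁ j x.2) * ((‖F₁ j x.2‖ ^ (q-2) / c : ℝ) : ℂ)
        else 0 with hy
      have hydef : ∀ x : Fin n × Fin n, y x =
          if x.1 = j then (starRingEnd ℂ) (F₁ j x.2) * ((‖F₁ j x.2‖ ^ (q-2) / c : ℝ) : ℂ)
          else 0 := fun x => rfl
      have hq1' : q - 1 ≠ 0 := by linarith
      have hnormy : ∀ l, ‖y (j, l)‖ = ‖F₁ j l‖ ^ (q-1) / c := by
        intro l
        have hmain : ‖F₁ j l‖ * (‖F₁ j l‖ ^ (q-2) / c) = ‖F₁ j l‖ ^ (q-1) / c := by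
          by_cases ha : F₁ j l = 0
          · simp [ha, Real.zero_rpow hq1']
          · have hpos : (0:ℝ) < ‖F₁ j l‖ := norm_pos_iff.mpr ha
            rw [← mul_div_assoc]
            congr 1
            nth_rewrite 1 [← Real.rpow_one ‖F₁ j l‖]
            rw [← Real.rpow_add hpos]
            ring_nf
        rw [hydef]
        simp only [if_pos (rfl : ((j, l) : Fin n × Fin n).1 = j), eq_self_iff_true,
          if_true, norm_mul, RCLike.norm_conj, Complex.norm_real]
        rw [Real.norm_of_nonneg (by positivity)]
        exact hmain
      have hnormyp : ∀ l, ‖y (j, l)‖ ^ p = ‖F₁ j l‖ ^ q / s := by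
        intro l
        rw [hnormy l, Real.div_rpow (Real.rpow_nonneg (norm_nonneg _) _) hcpos.le,
          ← Real.rpow_mul (norm_nonneg _), hpq2, hc, one_div,
          Real.rpow_inv_rpow hs0 hp0.ne']
      refine ⟨y, ?_, ?_⟩
      · -- unit norm of y
        show (∑ x : Fin n × Fin n, ‖y x‖ ^ p) ^ (1/p) = 1
        have hsum : ∑ x : Fin n × Fin n, ‖y x‖ ^ p = 1 := by
          rw [Fintype.sum_prod_type, Finset.sum_eq_single j]
          · rw [Finset.sum_congr rfl fun l _ => hnormyp l, ← Finset.sum_div, ← hs,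
              div_self hspos.ne']
          · intro j' _ hj'
            apply Finset.sum_eq_zero
            intro l _
            have : y (j', l) = 0 := by rw [hydef]; simp [hj']
            rw [this]
            simp [Real.zero_rpow hp0.ne']
          · simp
        rw [hsum, Real.one_rpow]
      · -- value of the image norm
        have himg : ∀ j', Ftilde.mulVec y j' =
            if j' = j then ((s / c : ℝ) : ℂ) else 0 := by
          intro j'
          rw [hmv]
          by_cases hj' : j' = j
          · subst hj'
            rw [if_pos rfl]
            have hterm : ∀ l, F₁ j' l * y (j', l) = ((‖F₁ j' l‖ ^ q / c : ℝ) : ℂ) := by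
              intro l
              rw [hydef, if_pos (rfl : ((j', l) : Fin n × Fin n).1 = j')]
              rw [← mul_assoc, Complex.mul_conj]
              by_cases ha : F₁ j' l = 0
              · simp [ha, Real.zero_rpow hq0.ne']
              · have hpos : (0:ℝ) < ‖F₁ j' l‖ := norm_pos_iff.mpr ha
                rw [Complex.normSq_eq_norm_sq, ← Complex.ofReal_mul]
                congr 1
                rw [← mul_div_assoc]
                congr 1
                rw [← Real.rpow_natCast ‖F₁ j' l‖ 2, ← Real.rpow_add hpos]
                norm_num
            rw [Finset.sum_congr rfl fun l _ => hterm l]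
            rw [← Complex.ofReal_sum]
            congr 1
            rw [← Finset.sum_div, ← hs]
          · rw [if_neg hj']
            apply Finset.sum_eq_zero
            intro l _
            have : y (j', l) = 0 := by rw [hydef]; simp [hj']
            rw [this, mul_zero]
        have hsc : s / c = s ^ (1/q) := by
          rw [hc, eq_comm]
          have h1q : 1 / q = 1 - 1 / p := by linarith
          rw [h1q, Real.rpow_sub hspos, Real.rpow_one]
        show (∑ j', ‖Ftilde.mulVec y j'‖ ^ p) ^ (1/p) = vecPNorm q (fun l => F₁ j l)
        have hsum : ∑ j', ‖Ftilde.mulVec y j'‖ ^ p = (s ^ (1/q)) ^ p := by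
          rw [Finset.sum_eq_single j]
          · rw [himg j, if_pos rfl, hsc, Complex.norm_real,
              Real.norm_of_nonneg (Real.rpow_nonneg hs0 _)]
          · intro j' _ hj'
            rw [himg j', if_neg hj']
            simp [Real.zero_rpow hp0.ne']
          · simp
        rw [hsum, hvq, one_div p, Real.rpow_rpow_inv (Real.rpow_nonneg hs0 _) hp0.ne']
  -- conclude
  have hub : ∀ r ∈ {r | ∃ y : Fin n × Fin n → ℂ,
      vecPNorm p y = 1 ∧ r = vecPNorm p (Ftilde.mulVec y)}, r ≤ M := by
    rintro r ⟨y, h1, rfl⟩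
    exact hbound y h1
  have hSne : Set.Nonempty {r | ∃ y : Fin n × Fin n → ℂ,
      vecPNorm p y = 1 ∧ r = vecPNorm p (Ftilde.mulVec y)} := by
    obtain ⟨y, h1, h2⟩ := hach ⟨0, hn⟩
    exact ⟨_, y, h1, rfl⟩
  apply le_antisymm
  · exact csSup_le hSne hub
  · refine ciSup_le fun j => ?_
    obtain ⟨y, h1, h2⟩ := hach j
    exact le_csSup ⟨M, hub⟩ ⟨y, h1, h2.symm⟩
end

section
/- Let L be an n×n complex matrix, h > 0 with ‖L‖h ≤ 1, k and m positive integers with m·e²/(k+1)! ≤ 1, and V_k = ∑_{i=0}^{k}(Lh)^i/i!. Then for every integer j with 1 ≤ j ≤ m, ‖(V_k^j − exp(Lhj))·exp(−Lhj)‖ ≤ (e−1)·j·e²/(k+1)!. -/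
open scoped Matrix.Norms.L2Operator

lemma aux_norm_one_le (n : ℕ) : ‖(1 : Matrix (Fin n) (Fin n) ℂ)‖ ≤ 1 := by
  rw [Matrix.l2_opNorm_def]
  have h1 : ((Matrix.toEuclideanLin (𝕜 := ℂ) (m := Fin n) (n := Fin n)).trans
      LinearMap.toContinuousLinearMap) (1 : Matrix (Fin n) (Fin n) ℂ)
      = ContinuousLinearMap.id ℂ (EuclideanSpace ℂ (Fin n)) := by
    ext x
    simp [Matrix.toEuclideanLin_apply]
  rw [h1]
  exact ContinuousLinearMap.norm_id_le

lemma aux_norm_pow_le {n : ℕ} (X : Matrix (Fin n) (Fin n) ℂ) (i : ℕ) :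
    ‖X ^ i‖ ≤ ‖X‖ ^ i := by
  cases i with
  | zero => simpa using aux_norm_one_le n
  | succ i => exact norm_pow_le' X i.succ_pos

lemma aux_exp_one_eq : Real.exp 1 = ∑' i : ℕ, ((i.factorial : ℝ))⁻¹ := by
  rw [Real.exp_eq_exp_ℝ, NormedSpace.exp_eq_tsum ℝ]
  simp [smul_eq_mul]

lemma aux_summable_inv_factorial : Summable fun i : ℕ => ((i.factorial : ℝ))⁻¹ := by
  have := NormedSpace.expSeries_summable' (𝕂 := ℝ) (1 : ℝ)
  simpa [smul_eq_mul] using this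

/-- Norm of matrix exponential bounded by exponential of norm. -/
lemma aux_norm_exp_le {n : ℕ} (x : Matrix (Fin n) (Fin n) ℂ) :
    ‖NormedSpace.exp x‖ ≤ Real.exp ‖x‖ := by
  rw [Real.exp_eq_exp_ℝ, NormedSpace.exp_eq_tsum ℂ, NormedSpace.exp_eq_tsum ℝ]
  refine (norm_tsum_le_tsum_norm (NormedSpace.norm_expSeries_summable' x)).trans ?_
  refine Summable.tsum_le_tsum ?_ (NormedSpace.norm_expSeries_summable' x)
    (NormedSpace.expSeries_summable' (𝕂 := ℝ) ‖x‖)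
  intro i
  rw [norm_smul, smul_eq_mul]
  have h1 : ‖((i.factorial : ℂ))⁻¹‖ = ((i.factorial : ℝ))⁻¹ := by
    rw [norm_inv]
    norm_num
  rw [h1]
  exact mul_le_mul_of_nonneg_left (aux_norm_pow_le x i) (by positivity)

/-- Taylor tail bound. -/
lemma aux_tail {n : ℕ} (k : ℕ) (A : Matrix (Fin n) (Fin n) ℂ) (hA : ‖A‖ ≤ 1) :
    ‖NormedSpace.exp A - ∑ i ∈ Finset.range (k + 1), ((i.factorial : ℂ)⁻¹) • A ^ i‖
      ≤ Real.exp 1 / (k + 1).factorial := by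
  have hs : Summable fun i : ℕ => ((i.factorial : ℂ))⁻¹ • A ^ i :=
    NormedSpace.expSeries_summable' (𝕂 := ℂ) A
  have hsplit := Summable.sum_add_tsum_nat_add (f := fun i : ℕ => ((i.factorial : ℂ))⁻¹ • A ^ i)
    (k + 1) hs
  have hexp : NormedSpace.exp A = ∑' i : ℕ, ((i.factorial : ℂ))⁻¹ • A ^ i := by
    rw [NormedSpace.exp_eq_tsum ℂ]
  have heq : NormedSpace.exp A - ∑ i ∈ Finset.range (k + 1), ((i.factorial : ℂ)⁻¹) • A ^ i
      = ∑' i : ℕ, (((i + (k + 1)).factorial : ℂ))⁻¹ • A ^ (i + (k + 1)) := by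
    rw [hexp, eq_comm, eq_sub_iff_add_eq, add_comm]
    exact hsplit
  rw [heq]
  have hnorms : Summable fun i : ℕ =>
      ‖(((i + (k + 1)).factorial : ℂ))⁻¹ • A ^ (i + (k + 1))‖ :=
    ((NormedSpace.norm_expSeries_summable' (𝕂 := ℂ) A).comp_injective
      (add_left_injective (k + 1)))
  refine (norm_tsum_le_tsum_norm hnorms).trans ?_
  have hg : Summable fun i : ℕ => (((k + 1).factorial : ℝ))⁻¹ * ((i.factorial : ℝ))⁻¹ :=
    aux_summable_inv_factorial.mul_left _
  have hle : ∀ i : ℕ, ‖(((i + (k + 1)).factorial : ℂ))⁻¹ • A ^ (i + (k + 1))‖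
      ≤ (((k + 1).factorial : ℝ))⁻¹ * ((i.factorial : ℝ))⁻¹ := by
    intro i
    rw [norm_smul]
    have h1 : ‖(((i + (k + 1)).factorial : ℂ))⁻¹‖ = (((i + (k + 1)).factorial : ℝ))⁻¹ := by
      rw [norm_inv]; norm_num
    rw [h1]
    have h2 : ‖A ^ (i + (k + 1))‖ ≤ 1 := by
      calc ‖A ^ (i + (k + 1))‖ ≤ ‖A‖ ^ (i + (k + 1)) := aux_norm_pow_le A _
        _ ≤ 1 ^ (i + (k + 1)) := pow_le_pow_left₀ (norm_nonneg A) hA _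
        _ = 1 := one_pow _
    have h3 : ((k + 1).factorial * i.factorial : ℝ) ≤ ((i + (k + 1)).factorial : ℝ) := by
      have hd : (k + 1).factorial * i.factorial ∣ (i + (k + 1)).factorial := by
        rw [Nat.add_comm i (k + 1)]
        exact Nat.factorial_mul_factorial_dvd_factorial_add _ _
      exact_mod_cast Nat.le_of_dvd (Nat.factorial_pos _) hd
    have h4 : (((i + (k + 1)).factorial : ℝ))⁻¹ ≤ (((k + 1).factorial : ℝ) * i.factorial)⁻¹ := by
      apply inv_anti₀
      · positivity
      · exact h3
    calc (((i + (k + 1)).factorial : ℝ))⁻¹ * ‖A ^ (i + (k + 1))‖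
        ≤ (((i + (k + 1)).factorial : ℝ))⁻¹ * 1 :=
          mul_le_mul_of_nonneg_left h2 (by positivity)
      _ = (((i + (k + 1)).factorial : ℝ))⁻¹ := mul_one _
      _ ≤ (((k + 1).factorial : ℝ) * i.factorial)⁻¹ := h4
      _ = (((k + 1).factorial : ℝ))⁻¹ * ((i.factorial : ℝ))⁻¹ := by
          rw [mul_inv]
  refine (Summable.tsum_le_tsum hle hnorms hg).trans ?_
  rw [tsum_mul_left, ← aux_exp_one_eq, div_eq_inv_mul]

lemma aux_exp_convex (t : ℝ) (h0 : 0 ≤ t) (h1 : t ≤ 1) :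
    Real.exp t ≤ 1 + (Real.exp 1 - 1) * t := by
  have := convexOn_exp.2 (Set.mem_univ (0:ℝ)) (Set.mem_univ 1)
    (by linarith : (0:ℝ) ≤ 1 - t) h0 (by ring)
  simp only [smul_eq_mul, mul_zero, mul_one, zero_add, Real.exp_zero] at this
  linarith

lemma aux_pow_sub_one {n : ℕ} (X : Matrix (Fin n) (Fin n) ℂ) (ε : ℝ)
    (hX : ‖X - 1‖ ≤ ε) : ∀ j : ℕ, ‖X ^ j - 1‖ ≤ (1 + ε) ^ j - 1 := by
  have hε : 0 ≤ ε := le_trans (norm_nonneg _) hX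
  intro j
  induction j with
  | zero => simp
  | succ j ih =>
    have hXj : ‖X ^ j‖ ≤ (1 + ε) ^ j := by
      calc ‖X ^ j‖ = ‖(X ^ j - 1) + 1‖ := by rw [sub_add_cancel]
        _ ≤ ‖X ^ j - 1‖ + ‖(1 : Matrix (Fin n) (Fin n) ℂ)‖ := norm_add_le _ _
        _ ≤ ((1 + ε) ^ j - 1) + 1 := add_le_add ih (aux_norm_one_le n)
        _ = (1 + ε) ^ j := by ring
    have hdecomp : X ^ (j + 1) - 1 = X ^ j * (X - 1) + (X ^ j - 1) := by
      rw [mul_sub, mul_one, ← pow_succ]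
      abel
    rw [hdecomp]
    calc ‖X ^ j * (X - 1) + (X ^ j - 1)‖
        ≤ ‖X ^ j * (X - 1)‖ + ‖X ^ j - 1‖ := norm_add_le _ _
      _ ≤ ‖X ^ j‖ * ‖X - 1‖ + ((1 + ε) ^ j - 1) := add_le_add (norm_mul_le _ _) ih
      _ ≤ (1 + ε) ^ j * ε + ((1 + ε) ^ j - 1) := by
          have h0 := norm_nonneg (X ^ j)
          nlinarith [mul_le_mul hXj hX (norm_nonneg (X - 1)) (by positivity : (0:ℝ) ≤ (1 + ε) ^ j)]
      _ = (1 + ε) ^ (j + 1) - 1 := by ring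

/-- Taylor remainder bound.  With `‖L‖h ≤ 1`, `m·e²/(k+1)! ≤ 1` and
`V_k = ∑_{i=0}^{k}(Lh)^i/i!`, for every `1 ≤ j ≤ m`,
`‖(V_k^j − exp(Lhj)) exp(−Lhj)‖ ≤ (e−1)·j·e²/(k+1)!`. -/
theorem taylor_remainder_bound (n : ℕ) (L : Matrix (Fin n) (Fin n) ℂ) (h : ℝ)
    (hh : 0 < h) (hLh : ‖L‖ * h ≤ 1) (k m : ℕ) (hk : 0 < k) (hm : 0 < m)
    (hmk : (m : ℝ) * Real.exp 1 ^ 2 / (k + 1).factorial ≤ 1) :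
    ∀ j : ℕ, 1 ≤ j → j ≤ m →
      ‖((∑ i ∈ Finset.range (k + 1), ((i.factorial : ℂ)⁻¹) • (h • L) ^ i) ^ j -
            NormedSpace.exp ((h * j : ℝ) • L)) *
          NormedSpace.exp (-((h * j : ℝ) • L))‖ ≤
        (Real.exp 1 - 1) * j * Real.exp 1 ^ 2 / (k + 1).factorial := by
  intro j hj1 hjm
  set A : Matrix (Fin n) (Fin n) ℂ := h • L with hAdef
  have hA1 : ‖A‖ ≤ 1 := by
    rw [hAdef, norm_smul, Real.norm_of_nonneg hh.le]
    linarith [hLh]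
  set V : Matrix (Fin n) (Fin n) ℂ :=
    ∑ i ∈ Finset.range (k + 1), ((i.factorial : ℂ)⁻¹) • A ^ i with hVdef
  set E : Matrix (Fin n) (Fin n) ℂ := NormedSpace.exp A with hEdef
  set F : Matrix (Fin n) (Fin n) ℂ := NormedSpace.exp (-A) with hFdef
  -- the scaled exponential equals powers
  have hsmul : ((h * j : ℝ) • L) = (j : ℕ) • A := by
    rw [hAdef, (Nat.cast_smul_eq_nsmul ℝ j (h • L)).symm, smul_smul, mul_comm]
  letI : NormedAlgebra ℚ (Matrix (Fin n) (Fin n) ℂ) := NormedAlgebra.restrictScalars ℚ ℂ _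
  have hexpj : NormedSpace.exp ((h * j : ℝ) • L) = E ^ j := by
    rw [hsmul, NormedSpace.exp_nsmul]
  have hexpnj : NormedSpace.exp (-((h * j : ℝ) • L)) = F ^ j := by
    rw [hsmul, ← smul_neg, NormedSpace.exp_nsmul]
  -- commutation facts
  have hcommAF : Commute A F := (Commute.neg_right (Commute.refl A)).exp_right
  have hcommVF : Commute V F := by
    refine Commute.sum_left _ _ _ fun i _ => ?_
    exact ((hcommAF.pow_left i).smul_left _)
  have hcommEF : Commute E F := (Commute.neg_right (Commute.refl A)).exp
  have hEF : E * F = 1 := by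
    rw [hEdef, hFdef, ← NormedSpace.exp_add_of_commute (Commute.neg_right (Commute.refl A)),
      add_neg_cancel, NormedSpace.exp_zero]
  set X : Matrix (Fin n) (Fin n) ℂ := V * F with hXdef
  have hiden : (V ^ j - NormedSpace.exp ((h * j : ℝ) • L)) *
      NormedSpace.exp (-((h * j : ℝ) • L)) = X ^ j - 1 := by
    rw [hexpj, hexpnj, sub_mul, ← hcommVF.mul_pow, ← hcommEF.mul_pow, hEF, one_pow, hXdef]
  rw [hiden]
  -- the ε bound
  set ε : ℝ := Real.exp 1 ^ 2 / (k + 1).factorial with hεdef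
  have hfacpos : (0:ℝ) < (k + 1).factorial := by positivity
  have hεpos : 0 < ε := by positivity
  have hF : ‖F‖ ≤ Real.exp 1 := by
    calc ‖F‖ ≤ Real.exp ‖-A‖ := aux_norm_exp_le _
      _ = Real.exp ‖A‖ := by rw [norm_neg]
      _ ≤ Real.exp 1 := Real.exp_le_exp.mpr hA1
  have hX1 : ‖X - 1‖ ≤ ε := by
    have hXm1 : X - 1 = (V - E) * F := by
      rw [sub_mul, hEF, hXdef]
    rw [hXm1]
    calc ‖(V - E) * F‖ ≤ ‖V - E‖ * ‖F‖ := norm_mul_le _ _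
      _ ≤ (Real.exp 1 / (k + 1).factorial) * Real.exp 1 := by
          apply mul_le_mul _ hF (norm_nonneg _) (by positivity)
          rw [norm_sub_rev]
          exact aux_tail k A hA1
      _ = ε := by rw [hεdef]; ring
  have hjε : (j : ℝ) * ε ≤ 1 := by
    calc (j : ℝ) * ε ≤ (m : ℝ) * ε := by
          apply mul_le_mul_of_nonneg_right _ hεpos.le
          exact_mod_cast hjm
      _ ≤ 1 := by rw [hεdef, ← mul_div_assoc]; exact hmk
  have hbound := aux_pow_sub_one X ε hX1 j
  have hpow : (1 + ε) ^ j - 1 ≤ (Real.exp 1 - 1) * ((j : ℝ) * ε) := by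
    have h1 : (1 + ε) ^ j ≤ Real.exp ((j : ℝ) * ε) := by
      calc (1 + ε) ^ j ≤ Real.exp ε ^ j := by
            apply pow_le_pow_left₀ (by positivity)
            linarith [Real.add_one_le_exp ε]
        _ = Real.exp ((j : ℝ) * ε) := by
            rw [← Real.exp_nat_mul]
    have h2 : Real.exp ((j : ℝ) * ε) ≤ 1 + (Real.exp 1 - 1) * ((j : ℝ) * ε) :=
      aux_exp_convex _ (by positivity) hjε
    linarith
  have hfinal : (Real.exp 1 - 1) * ((j : ℝ) * ε)
      = (Real.exp 1 - 1) * j * Real.exp 1 ^ 2 / (k + 1).factorial := by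
    rw [hεdef]; ring
  linarith [hbound, hpow, hfinal ▸ (le_trans hbound hpow)]
end

section
/- Let L be an n×n complex matrix with ‖L‖h ≤ 1 for h = T/m, m·e²/(k+1)! ≤ 1, V_k = ∑_{i=0}^{k}(Lh)^i/i!, and C = sup_{t∈[0,T]} ‖exp(Lt)‖. Then for any vector y₀ and any 1 ≤ j ≤ m, ‖V_k^j y₀ − exp(Lhj) y₀‖ ≤ ((e−1)e²j/(k+1)!)·C·‖y₀‖. -/
open Matrix
open scoped Matrix.Norms.L2Operator

set_option maxHeartbeats 4000000

/-- error of the truncated-Taylor time stepping on a vector.  With `h = T/m`,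
`‖L‖h ≤ 1`, `m·e²/(k+1)! ≤ 1`, `V_k = ∑_{i=0}^{k}(Lh)^i/i!` and
`C = sup_{t ∈ [0,T]} ‖exp(Lt)‖`, for any `y₀` and any `1 ≤ j ≤ m`,
`‖V_k^j y₀ − exp(Lhj) y₀‖ ≤ ((e−1)e²j/(k+1)!)·C·‖y₀‖`. -/
theorem taylor_time_stepping_vector_bound (n : ℕ) (L : Matrix (Fin n) (Fin n) ℂ)
    (T h : ℝ) (hT : 0 < T) (m k : ℕ) (hm : 0 < m) (hk : 0 < k)
    (hhm : h = T / m) (hLh : ‖L‖ * h ≤ 1)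
    (hmk : (m : ℝ) * Real.exp 1 ^ 2 / (k + 1).factorial ≤ 1)
    (C : ℝ)
    (hC : C = sSup ((fun t : ℝ => ‖NormedSpace.exp (t • L)‖) '' Set.Icc 0 T))
    (y₀ : EuclideanSpace ℂ (Fin n)) :
    ∀ j : ℕ, 1 ≤ j → j ≤ m →
      ‖(EuclideanSpace.equiv (Fin n) ℂ).symm
          (((∑ i ∈ Finset.range (k + 1), ((i.factorial : ℂ)⁻¹) • (h • L) ^ i) ^ j -
              NormedSpace.exp ((h * j : ℝ) • L)) *ᵥ y₀)‖ ≤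
        (Real.exp 1 - 1) * Real.exp 1 ^ 2 * j / (k + 1).factorial * C * ‖y₀‖ := by
  intro j hj1 hjm
  have hh0 : 0 < h := by rw [hhm]; positivity
  set A : Matrix (Fin n) (Fin n) ℂ := h • L with hA
  have hAnorm : ‖A‖ ≤ 1 := by
    rw [hA, norm_smul, Real.norm_of_nonneg hh0.le]
    linarith [hLh]
  set E : Matrix (Fin n) (Fin n) ℂ := NormedSpace.exp A with hE
  set V : Matrix (Fin n) (Fin n) ℂ :=
    ∑ i ∈ Finset.range (k + 1), ((i.factorial : ℂ)⁻¹) • A ^ i with hV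
  -- the summand of the exponential series
  set f : ℕ → Matrix (Fin n) (Fin n) ℂ := fun i => ((i.factorial : ℂ)⁻¹) • A ^ i with hf
  have hfs : Summable f := NormedSpace.expSeries_summable' (𝕂 := ℂ) A
  have hone : ‖(1 : Matrix (Fin n) (Fin n) ℂ)‖ ≤ 1 := by
    rw [Matrix.cstar_norm_def, _root_.map_one, ContinuousLinearMap.one_def]
    exact ContinuousLinearMap.norm_id_le
  have hApow : ∀ i : ℕ, ‖A ^ i‖ ≤ 1 := by
    intro i
    cases i with
    | zero => simpa using hone
    | succ i =>
        calc ‖A ^ (i+1)‖ ≤ ‖A‖ ^ (i+1) := norm_pow_le' A (Nat.succ_pos i)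
          _ ≤ 1 ^ (i+1) := pow_le_pow_left₀ (norm_nonneg _) hAnorm _
          _ = 1 := one_pow _
  have hfnorm : ∀ i : ℕ, ‖f i‖ ≤ ((i.factorial : ℝ))⁻¹ := by
    intro i
    rw [hf]
    calc ‖((i.factorial : ℂ)⁻¹) • A ^ i‖ = ‖(i.factorial : ℂ)‖⁻¹ * ‖A ^ i‖ := by
          rw [norm_smul, norm_inv]
      _ ≤ ((i.factorial : ℝ))⁻¹ * 1 := by
          apply mul_le_mul
          · rw [Complex.norm_natCast]
          · exact hApow i
          · exact norm_nonneg _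
          · positivity
      _ = ((i.factorial : ℝ))⁻¹ := mul_one _
  -- real tail quantities
  have hfactpos : (0:ℝ) < (k + 1).factorial := by positivity
  have hg : Summable (fun i : ℕ => ((i.factorial : ℝ))⁻¹) := by
    have := Real.summable_pow_div_factorial 1
    simpa [one_div] using this
  have hgsum : ∑' i : ℕ, ((i.factorial : ℝ))⁻¹ = Real.exp 1 := by
    rw [Real.exp_eq_exp_ℝ, NormedSpace.exp_eq_tsum_div]
    simp [one_div]
  -- tail of the real series
  have hg' : Summable (fun i : ℕ => (((i + (k+1)).factorial : ℝ))⁻¹) := by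
    exact (summable_nat_add_iff (k+1)).2 hg
  have htail : ∑' i : ℕ, (((i + (k+1)).factorial : ℝ))⁻¹ ≤ Real.exp 1 / (k+1).factorial := by
    have hle : ∀ i : ℕ, (((i + (k+1)).factorial : ℝ))⁻¹ ≤
        ((k+1).factorial : ℝ)⁻¹ * ((i.factorial : ℝ))⁻¹ := by
      intro i
      rw [← mul_inv]
      apply inv_anti₀
      · positivity
      · have := Nat.factorial_mul_factorial_dvd_factorial_add (k+1) i
        have h2 := Nat.le_of_dvd (Nat.factorial_pos _) this
        calc ((k+1).factorial : ℝ) * (i.factorial : ℝ)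
            = (((k+1).factorial * i.factorial : ℕ) : ℝ) := by push_cast; ring
          _ ≤ (((k+1+i).factorial : ℕ) : ℝ) := by exact_mod_cast h2
          _ = (((i + (k+1)).factorial : ℕ) : ℝ) := by rw [add_comm]
    calc ∑' i : ℕ, (((i + (k+1)).factorial : ℝ))⁻¹
        ≤ ∑' i : ℕ, ((k+1).factorial : ℝ)⁻¹ * ((i.factorial : ℝ))⁻¹ :=
          Summable.tsum_le_tsum hle hg' (hg.mul_left _)
      _ = ((k+1).factorial : ℝ)⁻¹ * ∑' i : ℕ, ((i.factorial : ℝ))⁻¹ := tsum_mul_left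
      _ = Real.exp 1 / (k+1).factorial := by rw [hgsum, div_eq_inv_mul, mul_comm]
  set δ : ℝ := Real.exp 1 / (k+1).factorial with hδdef
  have hδ0 : 0 ≤ δ := by positivity
  have he : (2:ℝ) ≤ Real.exp 1 := by
    have := Real.add_one_le_exp (1:ℝ); linarith
  -- bound on the Taylor remainder
  have hfs' : Summable (fun i : ℕ => ‖f (i + (k+1))‖) := by
    have : Summable (fun i : ℕ => ‖f i‖) := NormedSpace.norm_expSeries_summable' (𝕂 := ℂ) A
    exact (summable_nat_add_iff (k+1)).2 this
  have hD : ‖V - E‖ ≤ δ := by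
    have hsum := Summable.sum_add_tsum_nat_add (f := f) (k+1) hfs
    have hVE : V - E = -∑' i : ℕ, f (i + (k+1)) := by
      have hEt : E = ∑' i : ℕ, f i := by
        rw [hE, NormedSpace.exp_eq_tsum (𝕂 := ℂ)]
      rw [hEt, ← hsum, hV]
      abel
    rw [hVE, norm_neg]
    calc ‖∑' i : ℕ, f (i + (k+1))‖ ≤ ∑' i : ℕ, ‖f (i + (k+1))‖ :=
          norm_tsum_le_tsum_norm hfs'
      _ ≤ ∑' i : ℕ, (((i + (k+1)).factorial : ℝ))⁻¹ :=
          Summable.tsum_le_tsum (fun i => hfnorm _) hfs' hg'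
      _ ≤ δ := htail
  -- properties of C
  have hbdd : BddAbove ((fun t : ℝ => ‖NormedSpace.exp (t • L)‖) '' Set.Icc 0 T) := by
    apply IsCompact.bddAbove
    apply isCompact_Icc.image
    have hc : Continuous (fun t : ℝ => NormedSpace.exp (t • L)) := by
      have := (differentiable_exp_smul_const ℂ L).continuous.comp Complex.continuous_ofReal
      simpa [Function.comp_def, Complex.coe_smul] using this
    exact hc.norm
  have hCmem : ∀ t : ℝ, 0 ≤ t → t ≤ T → ‖NormedSpace.exp (t • L)‖ ≤ C := fun t h0 h1 =>
    hC ▸ le_csSup hbdd ⟨t, ⟨h0, h1⟩, rfl⟩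
  have hC0 : 0 ≤ C := le_trans (norm_nonneg _) (hCmem 0 le_rfl hT.le)
  have hEpow : ∀ p : ℕ, p ≤ m → ‖E ^ p‖ ≤ C := by
    intro p hp
    have hEq : E ^ p = NormedSpace.exp (((p : ℝ) * h) • L) := by
      rw [hE, ← Matrix.exp_nsmul, hA, ← Nat.cast_smul_eq_nsmul ℝ p (h • L), smul_smul]
    rw [hEq]
    apply hCmem
    · positivity
    · have hpm : (p:ℝ) ≤ m := Nat.cast_le.2 hp
      have hmT : (m:ℝ) * h = T := by
        rw [hhm]; field_simp
      nlinarith [hh0.le]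
  -- commutation and binomial expansion
  have hVA : Commute V A := by
    apply Commute.sum_left
    intro i _
    exact ((Commute.refl A).pow_left i).smul_left _
  have hVEc : Commute V E := hVA.exp_right
  have hDE : Commute (V - E) E := hVEc.sub_left (Commute.refl E)
  have hbin : V ^ j = ∑ q ∈ Finset.range (j+1),
      (V - E) ^ q * E ^ (j - q) * (j.choose q : Matrix (Fin n) (Fin n) ℂ) := by
    have hadd := hDE.add_pow j
    rwa [sub_add_cancel] at hadd
  have hsplit : V ^ j - E ^ j = ∑ q ∈ Finset.Ico 1 (j+1),
      (V - E) ^ q * E ^ (j - q) * (j.choose q : Matrix (Fin n) (Fin n) ℂ) := by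
    rw [hbin, Finset.range_eq_Ico, Finset.sum_eq_sum_Ico_succ_bot (Nat.succ_pos j)]
    simp only [pow_zero, one_mul, Nat.sub_zero, Nat.choose_zero_right, Nat.cast_one, mul_one]
    exact add_sub_cancel_left _ _
  have hnorm1 : ‖V ^ j - E ^ j‖ ≤
      ∑ q ∈ Finset.Ico 1 (j+1), (j.choose q : ℝ) * δ ^ q * C := by
    rw [hsplit]
    refine (norm_sum_le _ _).trans (Finset.sum_le_sum ?_)
    intro q hq
    obtain ⟨hq1, hq2⟩ := Finset.mem_Ico.1 hq
    calc ‖(V - E) ^ q * E ^ (j - q) * (j.choose q : Matrix (Fin n) (Fin n) ℂ)‖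
        = ‖(j.choose q) • ((V - E) ^ q * E ^ (j - q))‖ := by rw [nsmul_eq_mul']
      _ ≤ (j.choose q : ℝ) * ‖(V - E) ^ q * E ^ (j - q)‖ := norm_nsmul_le
      _ ≤ (j.choose q : ℝ) * (δ ^ q * C) := by
          refine mul_le_mul_of_nonneg_left ?_ (Nat.cast_nonneg _)
          calc ‖(V - E) ^ q * E ^ (j - q)‖ ≤ ‖(V - E) ^ q‖ * ‖E ^ (j - q)‖ := norm_mul_le _ _
            _ ≤ δ ^ q * C := by
                apply mul_le_mul
                · exact le_trans (norm_pow_le' _ hq1)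
                    (pow_le_pow_left₀ (norm_nonneg _) hD q)
                · exact hEpow _ (le_trans (Nat.sub_le _ _) hjm)
                · exact norm_nonneg _
                · positivity
      _ = (j.choose q : ℝ) * δ ^ q * C := by ring
  have hsum2 : ∑ q ∈ Finset.Ico 1 (j+1), (j.choose q : ℝ) * δ ^ q * C
      ≤ ((1 + δ) ^ j - 1) * C := by
    have hb : (1 + δ) ^ j = ∑ q ∈ Finset.range (j+1), (j.choose q : ℝ) * δ ^ q := by
      rw [add_comm, add_pow]
      refine Finset.sum_congr rfl fun q _ => ?_
      simp [one_pow]; ring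
    have hb2 : ∑ q ∈ Finset.Ico 1 (j+1), (j.choose q : ℝ) * δ ^ q = (1 + δ) ^ j - 1 := by
      rw [hb, Finset.range_eq_Ico, Finset.sum_eq_sum_Ico_succ_bot (Nat.succ_pos j)]
      simp
    calc ∑ q ∈ Finset.Ico 1 (j+1), (j.choose q : ℝ) * δ ^ q * C
        = (∑ q ∈ Finset.Ico 1 (j+1), (j.choose q : ℝ) * δ ^ q) * C := by
          rw [Finset.sum_mul]
      _ ≤ ((1 + δ) ^ j - 1) * C := le_of_eq (by rw [hb2])
  have hjδ : (j : ℝ) * δ ≤ 1 := by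
    calc (j:ℝ) * δ ≤ (m:ℝ) * δ := by
          exact mul_le_mul_of_nonneg_right (Nat.cast_le.2 hjm) hδ0
      _ = (m:ℝ) * Real.exp 1 / (k+1).factorial := by rw [hδdef]; ring
      _ ≤ (m:ℝ) * Real.exp 1 ^ 2 / (k+1).factorial := by
          gcongr
          nlinarith
      _ ≤ 1 := by exact_mod_cast hmk
  have hexp : (1 + δ) ^ j - 1 ≤ (Real.exp 1 - 1) * ((j:ℝ) * δ) := by
    have h1 : (1 + δ) ^ j ≤ Real.exp ((j:ℝ) * δ) := by
      calc (1 + δ) ^ j ≤ Real.exp δ ^ j :=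
            pow_le_pow_left₀ (by positivity) (by linarith [Real.add_one_le_exp δ]) j
        _ = Real.exp ((j:ℝ) * δ) := (Real.exp_nat_mul δ j).symm
    have h2 : Real.exp ((j:ℝ) * δ) ≤ 1 + (Real.exp 1 - 1) * ((j:ℝ) * δ) := by
      have hx0 : 0 ≤ (j:ℝ) * δ := by positivity
      have hcv := convexOn_exp.2 (Set.mem_univ (0:ℝ)) (Set.mem_univ (1:ℝ))
        (by linarith : (0:ℝ) ≤ 1 - (j:ℝ) * δ) hx0 (by ring)
      rw [smul_eq_mul, smul_eq_mul, smul_eq_mul, smul_eq_mul, mul_zero, mul_one, zero_add,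
        Real.exp_zero, mul_one] at hcv
      linarith
    linarith
  have hMat : ‖V ^ j - E ^ j‖ ≤
      (Real.exp 1 - 1) * Real.exp 1 ^ 2 * j / (k + 1).factorial * C := by
    refine (hnorm1.trans hsum2).trans ?_
    have he1 : (0:ℝ) ≤ Real.exp 1 - 1 := by linarith
    calc ((1 + δ) ^ j - 1) * C ≤ ((Real.exp 1 - 1) * ((j:ℝ) * δ)) * C :=
          mul_le_mul_of_nonneg_right hexp hC0
      _ = (Real.exp 1 - 1) * Real.exp 1 * j / (k+1).factorial * C := by
          rw [hδdef]; ring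
      _ ≤ (Real.exp 1 - 1) * Real.exp 1 ^ 2 * j / (k+1).factorial * C := by
          have h2 : Real.exp 1 ≤ Real.exp 1 ^ 2 := by nlinarith
          have hnn : (0:ℝ) ≤ (Real.exp 1 - 1) * (j:ℝ) * C / (k+1).factorial := by
            apply div_nonneg _ hfactpos.le
            exact mul_nonneg (mul_nonneg he1 (Nat.cast_nonneg _)) hC0
          calc (Real.exp 1 - 1) * Real.exp 1 * j / (k+1).factorial * C
              = (Real.exp 1 - 1) * (j:ℝ) * C / (k+1).factorial * Real.exp 1 := by ring
            _ ≤ (Real.exp 1 - 1) * (j:ℝ) * C / (k+1).factorial * Real.exp 1 ^ 2 :=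
                mul_le_mul_of_nonneg_left h2 hnn
            _ = (Real.exp 1 - 1) * Real.exp 1 ^ 2 * j / (k+1).factorial * C := by ring
  have hEj : E ^ j = NormedSpace.exp ((h * (j:ℝ)) • L) := by
    rw [hE, ← Matrix.exp_nsmul, hA, ← Nat.cast_smul_eq_nsmul ℝ j (h • L), smul_smul,
      mul_comm ((j:ℝ)) h]
  calc ‖(EuclideanSpace.equiv (Fin n) ℂ).symm
          ((V ^ j - NormedSpace.exp ((h * (j:ℝ)) • L)) *ᵥ y₀)‖
      ≤ ‖V ^ j - NormedSpace.exp ((h * (j:ℝ)) • L)‖ * ‖y₀‖ := Matrix.l2_opNorm_mulVec _ _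
    _ ≤ (Real.exp 1 - 1) * Real.exp 1 ^ 2 * j / (k + 1).factorial * C * ‖y₀‖ := by
        rw [← hEj]
        exact mul_le_mul_of_nonneg_right hMat (norm_nonneg _)
end

section
/- Let x : [0,∞) → ℂ^n be differentiable and satisfy dx_j/dt = (F₀)_j + ∑_l (F₁)_{jl} e^{i x_l}, where F₀ ∈ ℂ^n satisfies min_j Im((F₀)_j) = μ̃₀ ≥ 0 and F₁ ∈ ℂ^{n×n}. Fix p, q ∈ (1,∞) with 1/p + 1/q = 1. If at a time t the vector ψ(t) = (e^{i x_1(t)}, …, e^{i x_n(t)}) satisfies ‖F₁‖_{row,q} · ‖ψ(t)‖_p < μ̃₀, then d/dt (‖ψ(t)‖_p^p) ≤ 0. Consequently, if ‖F₁‖_{row,q}·‖ψ(0)‖_p < μ̃₀, then ‖ψ(t)‖_p ≤ ‖ψ(0)‖_p for all t ≥ 0. -/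
/-- dissipativity in the `p`-norm: for a solution of
`dx_j/dt = (F₀)_j + ∑_l (F₁)_{jl} e^{i x_l}` with `min_j Im (F₀)_j ≥ μ̃₀ ≥ 0`, if
`‖F₁‖_{row,q}·‖ψ(t)‖_p < μ̃₀` where `ψ(t) = (e^{i x_1(t)},…,e^{i x_n(t)})`, then
`d/dt ‖ψ(t)‖_p^p ≤ 0`; consequently if this holds at `t = 0` then
`‖ψ(t)‖_p ≤ ‖ψ(0)‖_p` for all `t ≥ 0`. -/
theorem dissipativity_p_norm (n : ℕ) (hn : 0 < n)
    (p q : ℝ) (hp : 1 < p) (hq : 1 < q) (hpq : 1 / p + 1 / q = 1)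
    (F₀ : Fin n → ℂ) (F₁ : Matrix (Fin n) (Fin n) ℂ)
    (μ₀ : ℝ) (hμ0 : 0 ≤ μ₀) (hμ : ∀ j, μ₀ ≤ (F₀ j).im)
    (x : ℝ → Fin n → ℂ)
    (hx : ∀ (j : Fin n) (t : ℝ),
      HasDerivAt (fun s => x s j)
        (F₀ j + ∑ l, F₁ j l * Complex.exp (Complex.I * x t l)) t) :
    (∀ t : ℝ, 0 ≤ t →
      (⨆ j : Fin n, vecPNorm q (fun l => F₁ j l)) *
          vecPNorm p (fun j => Complex.exp (Complex.I * x t j)) < μ₀ →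
      ∀ D : ℝ,
        HasDerivAt (fun s => ∑ j, ‖Complex.exp (Complex.I * x s j)‖ ^ p) D t →
        D ≤ 0) ∧
    ((⨆ j : Fin n, vecPNorm q (fun l => F₁ j l)) *
        vecPNorm p (fun j => Complex.exp (Complex.I * x 0 j)) < μ₀ →
      ∀ t : ℝ, 0 ≤ t →
        vecPNorm p (fun j => Complex.exp (Complex.I * x t j)) ≤
          vecPNorm p (fun j => Complex.exp (Complex.I * x 0 j))) := by
  haveI : Nonempty (Fin n) := ⟨⟨0, hn⟩⟩
  have hp0 : 0 < p := lt_trans one_pos hp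
  set M : ℝ := ⨆ j : Fin n, vecPNorm q (fun l => F₁ j l) with hM
  set ψ : ℝ → Fin n → ℂ := fun t j => Complex.exp (Complex.I * x t j) with hψ
  set v : Fin n → ℝ → ℂ := fun j t => F₀ j + ∑ l, F₁ j l * Complex.exp (Complex.I * x t l)
    with hv
  -- norm of ψ entries
  have hnormψ : ∀ t j, ‖ψ t j‖ = Real.exp (-(x t j).im) := by
    intro t j
    rw [hψ, Complex.norm_exp]
    congr 1
    simp [Complex.mul_re]
  have hnormψp : ∀ t j, ‖ψ t j‖ ^ p = Real.exp (-(x t j).im * p) := by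
    intro t j
    rw [hnormψ, Real.exp_mul]
  -- the sum function and its derivative
  set g : ℝ → ℝ := fun t => ∑ j, Real.exp (-(x t j).im * p) with hg
  have hgeq : (fun s => ∑ j, ‖Complex.exp (Complex.I * x s j)‖ ^ p) = g := by
    funext s
    exact Finset.sum_congr rfl fun j _ => hnormψp s j
  set G : ℝ → ℝ := fun t => ∑ j, Real.exp (-(x t j).im * p) * (-(v j t).im * p) with hG
  have hgderiv : ∀ t, HasDerivAt g (G t) t := by
    intro t
    apply HasDerivAt.fun_sum
    intro j _
    have h1 : HasDerivAt (fun s => (x s j).im) (v j t).im t :=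
      Complex.imCLM.hasFDerivAt.comp_hasDerivAt t (hx j t)
    exact (h1.neg.mul_const p).exp
  -- nonnegativity / bounds
  have hMnn : ∀ j, vecPNorm q (fun l => F₁ j l) ≤ M := by
    intro j
    exact le_ciSup (f := fun j : Fin n => vecPNorm q (fun l => F₁ j l))
      (Set.Finite.bddAbove (Set.finite_range _)) j
  have hvecnn : ∀ (r : ℝ) (y : Fin n → ℂ), 0 ≤ vecPNorm r y := by
    intro r y
    exact Real.rpow_nonneg (Finset.sum_nonneg fun i _ =>
      Real.rpow_nonneg (norm_nonneg _) r) _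
  -- Hölder bound on the interaction term
  have hconj : Real.HolderConjugate p q := Real.holderConjugate_iff.mpr ⟨hp, by simpa [one_div] using hpq⟩
  have hkey : ∀ t j, ‖∑ l, F₁ j l * ψ t l‖ ≤ M * vecPNorm p (ψ t) := by
    intro t j
    calc ‖∑ l, F₁ j l * ψ t l‖ ≤ ∑ l, ‖F₁ j l * ψ t l‖ := norm_sum_le _ _
      _ = ∑ l, ‖F₁ j l‖ * ‖ψ t l‖ := by simp [norm_mul]
      _ ≤ (∑ l, ‖F₁ j l‖ ^ q) ^ (1/q) * (∑ l, ‖ψ t l‖ ^ p) ^ (1/p) := by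
          have := Real.inner_le_Lp_mul_Lq_of_nonneg (Finset.univ)
            (f := fun l => ‖F₁ j l‖) (g := fun l => ‖ψ t l‖) hconj.symm
            (fun i _ => norm_nonneg _) (fun i _ => norm_nonneg _)
          simpa using this
      _ = vecPNorm q (fun l => F₁ j l) * vecPNorm p (ψ t) := rfl
      _ ≤ M * vecPNorm p (ψ t) :=
          mul_le_mul_of_nonneg_right (hMnn j) (hvecnn _ _)
  -- positivity of Im (v j t) under the smallness condition
  have him : ∀ t, M * vecPNorm p (ψ t) < μ₀ → ∀ j, 0 < (v j t).im := by
    intro t ht j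
    have h1 : (v j t).im = (F₀ j).im + (∑ l, F₁ j l * ψ t l).im := by
      simp [hv, hψ]
    have h2 : -(‖∑ l, F₁ j l * ψ t l‖) ≤ (∑ l, F₁ j l * ψ t l).im := by
      have h3 : |(∑ l, F₁ j l * ψ t l).im| ≤ ‖∑ l, F₁ j l * ψ t l‖ := by
        exact Complex.abs_im_le_norm _
      linarith [neg_abs_le (∑ l, F₁ j l * ψ t l).im]
    have := hkey t j
    have := hμ j
    rw [h1]
    linarith
  -- G t ≤ 0 (in fact < 0) under the smallness condition
  have hGneg : ∀ t, M * vecPNorm p (ψ t) < μ₀ → G t < 0 := by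
    intro t ht
    have : ∀ j : Fin n, Real.exp (-(x t j).im * p) * (-(v j t).im * p) < 0 := by
      intro j
      apply mul_neg_of_pos_of_neg (Real.exp_pos _)
      have := him t ht j
      nlinarith
    calc G t < ∑ _j : Fin n, (0:ℝ) :=
          Finset.sum_lt_sum_of_nonempty (by simp [Finset.univ_nonempty]) (fun j _ => this j)
      _ = 0 := by simp
  constructor
  · -- part 1
    intro t _ht hcond D hD
    rw [hgeq] at hD
    have : D = G t := hD.unique (hgderiv t)
    rw [this]
    exact le_of_lt (hGneg t hcond)
  · -- part 2
    intro hcond0 t ht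
    -- reduce to g t ≤ g 0
    have hgψ : ∀ s, vecPNorm p (ψ s) = (g s) ^ (1/p) := by
      intro s
      unfold vecPNorm
      congr 1
      exact Finset.sum_congr rfl fun j _ => hnormψp s j
    have hgnn : ∀ s, 0 ≤ g s := fun s =>
      Finset.sum_nonneg fun j _ => (Real.exp_pos _).le
    suffices hgt : g t ≤ g 0 by
      rw [hgψ, hgψ]
      exact Real.rpow_le_rpow (hgnn t) hgt (by positivity)
    -- condition holds whenever g s ≤ g 0
    have hM0 : 0 ≤ M := le_trans (hvecnn q (fun l => F₁ ⟨0, hn⟩ l)) (hMnn ⟨0, hn⟩)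
    have hcond' : ∀ s, g s ≤ g 0 → M * vecPNorm p (ψ s) < μ₀ := by
      intro s hs
      have h1 : vecPNorm p (ψ s) ≤ vecPNorm p (ψ 0) := by
        rw [hgψ, hgψ]
        exact Real.rpow_le_rpow (hgnn s) hs (by positivity)
      calc M * vecPNorm p (ψ s) ≤ M * vecPNorm p (ψ 0) :=
            mul_le_mul_of_nonneg_left h1 hM0
        _ < μ₀ := hcond0
    -- continuity of g
    have hgcont : Continuous g := by
      have : Differentiable ℝ g := fun s => (hgderiv s).differentiableAt
      exact this.continuous
    -- first crossing argument
    by_contra hcontra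
    push_neg at hcontra
    set K : Set ℝ := {s | s ∈ Set.Icc 0 t ∧ g s ≤ g 0} with hK
    have hKne : K.Nonempty := ⟨0, ⟨le_refl 0, ht⟩, le_refl _⟩
    have hKclosed : IsClosed K := by
      apply IsClosed.inter
      · exact isClosed_Icc
      · exact isClosed_le hgcont continuous_const
    have hKbdd : BddAbove K := ⟨t, fun s hs => hs.1.2⟩
    set t₁ : ℝ := sSup K with ht₁
    have ht₁mem : t₁ ∈ K := hKclosed.csSup_mem hKne hKbdd
    have ht₁lt : t₁ < t := by
      rcases lt_or_eq_of_le ht₁mem.1.2 with h | h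
      · exact h
      · exfalso
        have h5 := ht₁mem.2
        rw [h] at h5
        linarith
    have hgt₁ : g t₁ ≤ g 0 := ht₁mem.2
    have ht₁0 : 0 ≤ t₁ := ht₁mem.1.1
    -- between t₁ and t, g > g 0
    have hbetween : ∀ s, t₁ < s → s ≤ t → g 0 < g s := by
      intro s hs1 hs2
      by_contra h
      push_neg at h
      have : s ∈ K := ⟨⟨le_trans ht₁0 hs1.le, hs2⟩, h⟩
      exact absurd (le_csSup hKbdd this) (not_le.mpr hs1)
    -- derivative at t₁ is negative
    have hGt₁ : G t₁ < 0 := hGneg t₁ (hcond' t₁ hgt₁)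
    -- slope argument: find s ∈ (t₁, t] with g s < g t₁
    have hslope : Filter.Tendsto (slope g t₁) (nhdsWithin t₁ {t₁}ᶜ) (nhds (G t₁)) :=
      hasDerivAt_iff_tendsto_slope.mp (hgderiv t₁)
    have hslope' : Filter.Tendsto (slope g t₁) (nhdsWithin t₁ (Set.Ioi t₁)) (nhds (G t₁)) :=
      hslope.mono_left (nhdsWithin_mono _ (fun y hy => ne_of_gt hy))
    have hev : ∀ᶠ s in nhdsWithin t₁ (Set.Ioi t₁), slope g t₁ s < 0 :=
      hslope'.eventually_lt_const hGt₁
    have hmem : Set.Ioc t₁ t ∈ nhdsWithin t₁ (Set.Ioi t₁) :=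
      Ioc_mem_nhdsGT_of_mem ⟨le_refl _, ht₁lt⟩
    have : ∃ s, slope g t₁ s < 0 ∧ s ∈ Set.Ioc t₁ t := by
      rcases (hev.and (Filter.eventually_of_mem hmem (fun y hy => hy))).exists with ⟨s, hs⟩
      exact ⟨s, hs.1, hs.2⟩
    rcases this with ⟨s, hs1, hs2, hs3⟩
    have hgs : g s < g t₁ := by
      have hd : 0 < s - t₁ := sub_pos.mpr hs2
      have := hs1
      rw [slope_def_field] at this
      have h4 : (g s - g t₁) / (s - t₁) < 0 := by
        simpa [div_sub_div_same] using this
      rcases div_neg_iff.mp h4 with ⟨h5, h6⟩ | ⟨h5, h6⟩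
      · linarith
      · linarith
    exact absurd (hbetween s hs2 hs3) (not_lt.mpr (le_trans hgs.le hgt₁))
end
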